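/- Let û ∈ ℝ^J with ûⱼ = αⱼ|x̂ⱼ| ≥ 0, and Γ ∈ [0, |J|]. Consider the linear program: minimize Σⱼ yⱼ + Γz over (u, y, z) subject to yⱼ + z ≥ uⱼ, −uⱼ ≤ αⱼx̂ⱼ ≤ uⱼ, yⱼ ≥ 0, z ≥ 0. Then an optimal solution is uⱼ* = αⱼ|x̂ⱼ|, z* = the ⌈Γ⌉-th largest value among {αⱼ|x̂ⱼ|}, yⱼ* = max{uⱼ* − z*, 0}, and the optimal objective value equals Σ_{k=1}^{⌊Γ⌋} w_{jₖ} + (Γ − ⌊Γ⌋) w_{j_{⌈Γ⌉}}, where w_{jₖ} denotes the k-th largest element of {αⱼ|x̂ⱼ|}. -/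

import Mathlib

/-- Auxiliary LP computing the Bertsimas–Sim protection function value. -/
theorem stmt_15 {N : ℕ} (α xh : Fin N → ℝ) (Γ : ℝ) (W : ℕ → ℝ)
    (e : Equiv.Perm (Fin N))
    (hW : ∀ k : Fin N, W (k : ℕ) = α (e k) * |xh (e k)|)
    (hW0 : ∀ k, N ≤ k → W k = 0)
    (hsort : ∀ k l, k ≤ l → W l ≤ W k)
    (hΓ0 : 0 ≤ Γ) (hΓN : Γ ≤ (N : ℝ)) (hceil : 1 ≤ ⌈Γ⌉₊) :
    IsLeast {r | ∃ (u y : Fin N → ℝ) (z : ℝ),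
        (∀ j, y j + z ≥ u j) ∧ (∀ j, -(u j) ≤ α j * xh j) ∧ (∀ j, α j * xh j ≤ u j) ∧
        (∀ j, 0 ≤ y j) ∧ 0 ≤ z ∧ r = (∑ j, y j) + Γ * z}
      ((∑ k ∈ Finset.range ⌊Γ⌋₊, W k) + (Γ - (⌊Γ⌋₊ : ℝ)) * W (⌈Γ⌉₊ - 1)) ∧
    (let u : Fin N → ℝ := fun j => α j * |xh j|
     let z : ℝ := W (⌈Γ⌉₊ - 1)
     let y : Fin N → ℝ := fun j => max (u j - z) 0
     (∀ j, y j + z ≥ u j) ∧ (∀ j, -(u j) ≤ α j * xh j) ∧ (∀ j, α j * xh j ≤ u j) ∧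
     (∀ j, 0 ≤ y j) ∧ 0 ≤ z ∧
     (∑ j, y j) + Γ * z
       = (∑ k ∈ Finset.range ⌊Γ⌋₊, W k) + (Γ - (⌊Γ⌋₊ : ℝ)) * W (⌈Γ⌉₊ - 1)) := by
  have hcN : ⌈Γ⌉₊ ≤ N := Nat.ceil_le.mpr hΓN
  have hfc : ⌊Γ⌋₊ ≤ ⌈Γ⌉₊ := Nat.floor_le_ceil Γ
  have hcf : ⌈Γ⌉₊ ≤ ⌊Γ⌋₊ + 1 := Nat.ceil_le_floor_add_one Γ
  have hfN : ⌊Γ⌋₊ ≤ N := le_trans hfc hcN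
  have hfΓ : (⌊Γ⌋₊ : ℝ) ≤ Γ := Nat.floor_le hΓ0
  have hΓc : Γ ≤ (⌈Γ⌉₊ : ℝ) := Nat.le_ceil Γ
  have hWnonneg : ∀ k, 0 ≤ W k := by
    intro k
    rcases le_or_gt N k with h | h
    · rw [hW0 k h]
    · have := hsort k N h.le
      rw [hW0 N le_rfl] at this
      linarith
  have hα : ∀ j, 0 ≤ α j * |xh j| := by
    intro j
    have h := hW (e.symm j)
    rw [Equiv.apply_symm_apply] at h
    rw [← h]
    exact hWnonneg _
  have habs : ∀ j, |α j * xh j| = α j * |xh j| := by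
    intro j
    rcases eq_or_ne (xh j) 0 with h | h
    · simp [h]
    · have hx : 0 < |xh j| := abs_pos.mpr h
      have hαj : 0 ≤ α j := by nlinarith [hα j]
      rw [abs_mul, abs_of_nonneg hαj]
  have hsum : ∀ z : ℝ, (∑ j, max (α j * |xh j| - z) 0)
      = ∑ k ∈ Finset.range N, max (W k - z) 0 := by
    intro z
    rw [← Fin.sum_univ_eq_sum_range (fun k => max (W k - z) 0) N]
    rw [← Equiv.sum_comp e (fun j => max (α j * |xh j| - z) 0)]
    exact Finset.sum_congr rfl fun k _ => by rw [hW k]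
  have hsub : ∀ z : ℝ, ∑ k ∈ Finset.range ⌊Γ⌋₊, (W k - z)
      = (∑ k ∈ Finset.range ⌊Γ⌋₊, W k) - (⌊Γ⌋₊ : ℝ) * z := by
    intro z
    rw [Finset.sum_sub_distrib, Finset.sum_const, Finset.card_range, nsmul_eq_mul]
  have key : ∀ z : ℝ, (∑ k ∈ Finset.range ⌊Γ⌋₊, W k)
      + (Γ - (⌊Γ⌋₊ : ℝ)) * W (⌈Γ⌉₊ - 1) - Γ * z
      ≤ ∑ k ∈ Finset.range N, max (W k - z) 0 := by
    intro z
    have h1 : ∑ k ∈ Finset.range ⌊Γ⌋₊, (W k - z)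
        ≤ ∑ k ∈ Finset.range ⌊Γ⌋₊, max (W k - z) 0 :=
      Finset.sum_le_sum fun k _ => le_max_left _ _
    rcases eq_or_lt_of_le hfc with heq | hlt
    · have hΓf : Γ = (⌊Γ⌋₊ : ℝ) := by
        refine le_antisymm ?_ hfΓ
        rw [heq]; exact hΓc
      have h2 : ∑ k ∈ Finset.range ⌊Γ⌋₊, max (W k - z) 0
          ≤ ∑ k ∈ Finset.range N, max (W k - z) 0 :=
        Finset.sum_le_sum_of_subset_of_nonneg (Finset.range_subset_range.mpr hfN)
          (fun i _ _ => le_max_right _ 0)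
      rw [hsub z] at h1
      have hzero : (Γ - (⌊Γ⌋₊ : ℝ)) * W (⌈Γ⌉₊ - 1) = 0 := by
        have h0 : Γ - (⌊Γ⌋₊ : ℝ) = 0 := by linarith
        rw [h0, zero_mul]
      have hz' : Γ * z = (⌊Γ⌋₊ : ℝ) * z := by rw [mul_eq_mul_right_iff]; left; exact hΓf
      linarith
    · have hc1 : ⌈Γ⌉₊ = ⌊Γ⌋₊ + 1 := le_antisymm hcf hlt
      have hc1' : ⌈Γ⌉₊ - 1 = ⌊Γ⌋₊ := by omega
      have hfrac0 : 0 ≤ Γ - (⌊Γ⌋₊ : ℝ) := by linarith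
      have hfrac1 : Γ - (⌊Γ⌋₊ : ℝ) ≤ 1 := by
        have : (⌈Γ⌉₊ : ℝ) = (⌊Γ⌋₊ : ℝ) + 1 := by exact_mod_cast congrArg (Nat.cast (R := ℝ)) hc1
        linarith
      have h3 : (Γ - (⌊Γ⌋₊ : ℝ)) * (W ⌊Γ⌋₊ - z) ≤ max (W ⌊Γ⌋₊ - z) 0 := by
        rcases le_or_gt 0 (W ⌊Γ⌋₊ - z) with h | h
        · calc (Γ - (⌊Γ⌋₊ : ℝ)) * (W ⌊Γ⌋₊ - z) ≤ 1 * (W ⌊Γ⌋₊ - z) := by nlinarith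
            _ = W ⌊Γ⌋₊ - z := one_mul _
            _ ≤ max (W ⌊Γ⌋₊ - z) 0 := le_max_left _ _
        · calc (Γ - (⌊Γ⌋₊ : ℝ)) * (W ⌊Γ⌋₊ - z) ≤ 0 := by nlinarith
            _ ≤ max (W ⌊Γ⌋₊ - z) 0 := le_max_right _ _
      have h2 : ∑ k ∈ Finset.range (⌊Γ⌋₊ + 1), max (W k - z) 0
          ≤ ∑ k ∈ Finset.range N, max (W k - z) 0 :=
        Finset.sum_le_sum_of_subset_of_nonneg
          (Finset.range_subset_range.mpr (hc1 ▸ hcN))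
          (fun i _ _ => le_max_right _ 0)
      rw [Finset.sum_range_succ] at h2
      rw [hsub z] at h1
      rw [hc1']
      linarith
  have hz0 : 0 ≤ W (⌈Γ⌉₊ - 1) := hWnonneg _
  have hfeas : (∀ j, max (α j * |xh j| - W (⌈Γ⌉₊ - 1)) 0 + W (⌈Γ⌉₊ - 1) ≥ α j * |xh j|) ∧
      (∀ j, -(α j * |xh j|) ≤ α j * xh j) ∧ (∀ j, α j * xh j ≤ α j * |xh j|) ∧
      (∀ j, 0 ≤ max (α j * |xh j| - W (⌈Γ⌉₊ - 1)) 0) ∧ 0 ≤ W (⌈Γ⌉₊ - 1) ∧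
      (∑ j, max (α j * |xh j| - W (⌈Γ⌉₊ - 1)) 0) + Γ * W (⌈Γ⌉₊ - 1)
        = (∑ k ∈ Finset.range ⌊Γ⌋₊, W k) + (Γ - (⌊Γ⌋₊ : ℝ)) * W (⌈Γ⌉₊ - 1) := by
    refine ⟨fun j => ?_, fun j => ?_, fun j => ?_, fun j => le_max_right _ _, hz0, ?_⟩
    · have := le_max_left (α j * |xh j| - W (⌈Γ⌉₊ - 1)) 0
      linarith
    · have := abs_le.mp (le_of_eq (habs j))
      linarith [neg_abs_le (α j * xh j), le_abs_self (α j * xh j), (habs j)]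
    · linarith [le_abs_self (α j * xh j), (habs j)]
    · rw [hsum]
      have hsplit : ∑ k ∈ Finset.range N, max (W k - W (⌈Γ⌉₊ - 1)) 0
          = ∑ k ∈ Finset.range ⌊Γ⌋₊, (W k - W (⌈Γ⌉₊ - 1)) := by
        rw [Finset.range_eq_Ico, ← Finset.sum_Ico_consecutive _ (Nat.zero_le ⌊Γ⌋₊) hfN]
        have hA : ∑ k ∈ Finset.Ico 0 ⌊Γ⌋₊, max (W k - W (⌈Γ⌉₊ - 1)) 0
            = ∑ k ∈ Finset.Ico 0 ⌊Γ⌋₊, (W k - W (⌈Γ⌉₊ - 1)) := by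
          refine Finset.sum_congr rfl fun k hk => ?_
          rw [Finset.mem_Ico] at hk
          have hk1 : k ≤ ⌈Γ⌉₊ - 1 := by omega
          have := hsort k (⌈Γ⌉₊ - 1) hk1
          exact max_eq_left (by linarith)
        have hB : ∑ k ∈ Finset.Ico ⌊Γ⌋₊ N, max (W k - W (⌈Γ⌉₊ - 1)) 0 = 0 := by
          refine Finset.sum_eq_zero fun k hk => ?_
          rw [Finset.mem_Ico] at hk
          have hk1 : ⌈Γ⌉₊ - 1 ≤ k := by omega
          have := hsort (⌈Γ⌉₊ - 1) k hk1
          exact max_eq_right (by linarith)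
        rw [hA, hB, add_zero, Finset.range_eq_Ico]
      rw [hsplit, hsub]
      ring
  refine ⟨⟨?_, ?_⟩, hfeas⟩
  · exact ⟨fun j => α j * |xh j|, fun j => max (α j * |xh j| - W (⌈Γ⌉₊ - 1)) 0,
      W (⌈Γ⌉₊ - 1), hfeas.1, hfeas.2.1, hfeas.2.2.1, hfeas.2.2.2.1, hfeas.2.2.2.2.1,
      hfeas.2.2.2.2.2.symm⟩
  · rintro r ⟨u, y, z, hyz, hul, hur, hy0, hz, rfl⟩
    have hyb : ∀ j, max (α j * |xh j| - z) 0 ≤ y j := by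
      intro j
      have hu1 : |α j * xh j| ≤ u j := abs_le.mpr ⟨hul j, hur j⟩
      rw [habs j] at hu1
      exact max_le (by linarith [hyz j]) (hy0 j)
    have h1 : ∑ j, max (α j * |xh j| - z) 0 ≤ ∑ j, y j := Finset.sum_le_sum fun j _ => hyb j
    have h2 := key z
    rw [hsum z] at h1
    linarith
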